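/- Let l and p be odd primes and let E be an elliptic curve over ℚ such that the homomorphism Gal(ℚ̄/ℚ) → AddAut(E(ℚ̄)[l]) induced by the Galois action on points is surjective. Let K ⊆ ℚ̄ be a finite Galois extension of ℚ whose degree [K:ℚ] is a power of p. Then E(K) has no point of order l, i.e., E(K)[l] = 0. -/

import Mathlib

open WeierstrassCurve WeierstrassCurve.Affine
open scoped Classical

/-- Let `l` and `p` be odd primes and `E` an elliptic curve over `ℚ` whose mod `l` Galois
representation is surjective (every additive automorphism of the `l`-torsion of `E(ℚ̄)` is
induced by some element of `Gal(ℚ̄/ℚ)`). If `K ⊆ ℚ̄` is a finite Galois extension of `ℚ` of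
`p`-power degree, then `E(K)` has no point of order `l`. -/
theorem no_l_torsion_over_p_power_galois (l p : ℕ) (hl : l.Prime) (hlodd : Odd l)
    (hp : p.Prime) (hpodd : Odd p)
    (E : WeierstrassCurve ℚ) [E.IsElliptic]
    (hsurj : ∀ φ : Submodule.torsionBy ℤ (Affine.Point (Affine.baseChange E (AlgebraicClosure ℚ))) (l : ℤ) ≃+
        Submodule.torsionBy ℤ (Affine.Point (Affine.baseChange E (AlgebraicClosure ℚ))) (l : ℤ),
      ∃ σ : AlgebraicClosure ℚ ≃ₐ[ℚ] AlgebraicClosure ℚ,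
        ∀ P : Submodule.torsionBy ℤ (Affine.Point (Affine.baseChange E (AlgebraicClosure ℚ))) (l : ℤ),
          Affine.Point.map (W' := E) σ.toAlgHom P.1 = (φ P).1)
    (K : IntermediateField ℚ (AlgebraicClosure ℚ))
    (hfin : FiniteDimensional ℚ K) (hgal : IsGalois ℚ K)
    (hdeg : ∃ n : ℕ, Module.finrank ℚ K = p ^ n) :
    ∀ P : (Affine.Point (Affine.baseChange E K)), l • P = 0 → P = 0 := by
  obtain ⟨n, hn⟩ := hdeg
  intro P hP
  set T := Submodule.torsionBy ℤ (Affine.Point (Affine.baseChange E (AlgebraicClosure ℚ))) (l : ℤ) with hT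
  set Q : (Affine.Point (Affine.baseChange E (AlgebraicClosure ℚ))) := Affine.Point.map (W' := E) K.val P with hQdef
  have hlQ : (l : ℤ) • Q = 0 := by
    have h1 : l • Q = 0 := by
      rw [hQdef, ← map_nsmul, hP, map_zero]
    simpa [natCast_zsmul] using h1
  have hQT : Q ∈ T := by rwa [hT, Submodule.mem_torsionBy_iff]
  -- negation automorphism of the torsion submodule
  let φ : T ≃+ T := AddEquiv.neg T
  have hφ : ∀ R : T, (φ R).1 = -R.1 := fun R => rfl
  obtain ⟨σ, hσ⟩ := hsurj φ
  -- iterating σ acts as (-1)^m on torsion points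
  have key : ∀ m : ℕ, ∀ R : T,
      Affine.Point.map (W' := E) ((σ ^ m).toAlgHom) R.1 = (((-1 : ℤ) ^ m • R : T) : (Affine.Point (Affine.baseChange E (AlgebraicClosure ℚ)))) := by
    intro m
    induction m with
    | zero =>
      intro R
      have h1 : ((σ ^ 0 : AlgebraicClosure ℚ ≃ₐ[ℚ] AlgebraicClosure ℚ)).toAlgHom =
          AlgHom.id ℚ (AlgebraicClosure ℚ) := by
        ext x; simp
      rw [h1, pow_zero, one_smul]
      cases R.1 <;> rfl
    | succ m ih =>
      intro R
      have hcomp : ((σ ^ (m + 1)).toAlgHom) =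
          σ.toAlgHom.comp ((σ ^ m).toAlgHom) := by
        ext x
        simp [pow_succ', AlgEquiv.mul_apply]
      rw [hcomp, ← Affine.Point.map_map, ih R, hσ ((-1 : ℤ) ^ m • R), hφ]
      push_cast
      rw [pow_succ]
      module
  -- σ ^ (p ^ n) fixes K pointwise
  have hfix : ((σ ^ (p ^ n)).toAlgHom).comp K.val = (K.val : ↥K →ₐ[ℚ] AlgebraicClosure ℚ) := by
    have hcard : Fintype.card (↥K ≃ₐ[ℚ] ↥K) = p ^ n := by
      rw [← Nat.card_eq_fintype_card, IsGalois.card_aut_eq_finrank, hn]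
    have hτ : (AlgEquiv.restrictNormalHom (F := ℚ) (K₁ := AlgebraicClosure ℚ) ↥K) σ ^ (p ^ n)
        = 1 := by
      rw [← hcard]; exact pow_card_eq_one
    ext x
    have h1 : (AlgEquiv.restrictNormalHom (F := ℚ) (K₁ := AlgebraicClosure ℚ) ↥K) (σ ^ (p ^ n)) = 1 := by
      rw [map_pow, hτ]
    have h2 : (((AlgEquiv.restrictNormalHom (F := ℚ) (K₁ := AlgebraicClosure ℚ) ↥K) (σ ^ (p ^ n)) x : ↥K) :
        AlgebraicClosure ℚ) = (σ ^ (p ^ n)) x := AlgEquiv.restrictNormal_commutes _ K x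
    rw [h1] at h2
    simpa using h2.symm
  -- hence σ ^ (p ^ n) fixes Q
  have hQfix : Affine.Point.map (W' := E) ((σ ^ (p ^ n)).toAlgHom) Q = Q := by
    rw [hQdef, Affine.Point.map_map, hfix]
  -- but it also negates Q
  have hodd : Odd (p ^ n) := hpodd.pow
  have hneg : Affine.Point.map (W' := E) ((σ ^ (p ^ n)).toAlgHom) Q = -Q := by
    have h1 := key (p ^ n) ⟨Q, hQT⟩
    rw [hodd.neg_one_pow, neg_smul, one_smul] at h1
    rw [h1]
    rfl
  have h2Q : Q + Q = 0 := by
    have hQnQ : Q = -Q := by rw [← hneg, hQfix]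
    exact eq_neg_iff_add_eq_zero.mp hQnQ
  -- Q has odd order l, so Q = 0
  obtain ⟨k, hk⟩ := hlodd
  have hQ0 : Q = 0 := by
    have h1 : ((2 * k + 1 : ℕ) : ℤ) • Q = 0 := by rw [← hk]; exact_mod_cast hlQ
    have h2 : ((2 * k + 1 : ℕ) : ℤ) • Q = (k : ℤ) • (Q + Q) + Q := by
      push_cast
      module
    rw [h2, h2Q] at h1
    rwa [zsmul_zero, zero_add] at h1
  -- conclude by injectivity
  have : Affine.Point.map (W' := E) K.val P = Affine.Point.map (W' := E) K.val 0 := by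
    rw [map_zero, ← hQdef, hQ0]
  exact Affine.Point.map_injective (W' := E) K.val this
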